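/- Let n ≥ 1 and k ≥ 1 be integers, let w_0 ≤ w_1 ≤ … ≤ w_n be positive integers and let d_1, …, d_k be positive integers such that: (i) w_j divides d_i for all j ∈ {0,…,n} and all i ∈ {1,…,k}; (ii) d_1 + … + d_k < w_0 + … + w_n; (iii) for every subset {i_1,…,i_{k+1}} ⊆ {0,…,n} of size k+1 the greatest common divisor of w_{i_1},…,w_{i_{k+1}} equals 1. Then there exist k pairwise disjoint subsets I_1, …, I_k of {0,…,n} such that d_i = ∑_{j ∈ I_i} w_j for every i ∈ {1,…,k}, and w_j = 1 for every j ∈ {0,…,n} not belonging to I_1 ∪ … ∪ I_k. -/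

import Mathlib

set_option linter.unusedVariables false


private lemma qnef_sum_le_prod {ι : Type*} (s : Finset ι) (f : ι → ℕ)
    (h : ∀ i ∈ s, 2 ≤ f i) : ∑ i ∈ s, f i ≤ ∏ i ∈ s, f i := by
  induction s using Finset.cons_induction with
  | empty => simp
  | cons a s ha ih =>
    rw [Finset.sum_cons, Finset.prod_cons]
    have hfa : 2 ≤ f a := h a (Finset.mem_cons_self a s)
    have ihs : ∑ i ∈ s, f i ≤ ∏ i ∈ s, f i := ih fun i hi => h i (Finset.mem_cons_of_mem hi)
    rcases s.eq_empty_or_nonempty with rfl | hne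
    · simp
    · have h2 : 2 ≤ ∑ i ∈ s, f i := by
        obtain ⟨b, hb⟩ := hne
        calc 2 ≤ f b := h b (Finset.mem_cons_of_mem hb)
        _ ≤ ∑ i ∈ s, f i := Finset.single_le_sum (fun i _ => Nat.zero_le _) hb
      nlinarith [ihs, hfa, h2]

private lemma qnef_prod_primes_dvd {ι : Type*} [DecidableEq ι] (q : ι → ℕ) (g : ℕ)
    (G : Finset ι) (hprime : ∀ j ∈ G, (q j).Prime)
    (hinj : ∀ i ∈ G, ∀ j ∈ G, q i = q j → i = j)
    (hdvd : ∀ j ∈ G, q j ∣ g) : ∏ j ∈ G, q j ∣ g := by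
  induction G using Finset.cons_induction with
  | empty => simp
  | cons a s ha ih =>
    rw [Finset.prod_cons]
    have hcop : Nat.Coprime (q a) (∏ j ∈ s, q j) := by
      refine Nat.Coprime.prod_right fun i hi => ?_
      have hne : q a ≠ q i := fun h => ha (by
        have := hinj a (Finset.mem_cons_self a s) i (Finset.mem_cons_of_mem hi) h
        rwa [this])
      exact (Nat.coprime_primes (hprime a (Finset.mem_cons_self a s))
        (hprime i (Finset.mem_cons_of_mem hi))).mpr hne
    exact hcop.mul_dvd_of_dvd_of_dvd (hdvd a (Finset.mem_cons_self a s))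
      (ih (fun j hj => hprime j (Finset.mem_cons_of_mem hj))
        (fun i hi j hj h => hinj i (Finset.mem_cons_of_mem hi) j (Finset.mem_cons_of_mem hj) h)
        (fun j hj => hdvd j (Finset.mem_cons_of_mem hj)))

private lemma qnef_exists_disjoint_subsets {ι : Type*} [DecidableEq ι] :
    ∀ (k : ℕ) (O : Finset ι) (e : Fin k → ℕ), (∑ i, e i ≤ O.card) →
    ∃ f : Fin k → Finset ι, (∀ i, f i ⊆ O) ∧
      (∀ i i', i ≠ i' → Disjoint (f i) (f i')) ∧ (∀ i, (f i).card = e i) := by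
  intro k
  induction k with
  | zero => exact fun O e _ => ⟨fun i => i.elim0, fun i => i.elim0, fun i => i.elim0, fun i => i.elim0⟩
  | succ k ih =>
    intro O e hsum
    have h0 : e 0 ≤ O.card := le_trans (by
      calc e 0 ≤ ∑ i, e i := Finset.single_le_sum (fun i _ => Nat.zero_le _) (Finset.mem_univ 0)
      ) hsum
    obtain ⟨O₀, hO₀sub, hO₀card⟩ := Finset.exists_subset_card_eq h0
    have hrest : ∑ i : Fin k, e (Fin.succ i) ≤ (O \ O₀).card := by
      rw [Finset.card_sdiff_of_subset hO₀sub, hO₀card]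
      have : ∑ i, e i = e 0 + ∑ i : Fin k, e (Fin.succ i) := Fin.sum_univ_succ e
      omega
    obtain ⟨f', hf'sub, hf'disj, hf'card⟩ := ih (O \ O₀) (fun i => e i.succ) hrest
    refine ⟨fun i => Fin.cases O₀ f' i, ?_, ?_, ?_⟩
    · intro i
      refine Fin.cases ?_ ?_ i
      · simpa using hO₀sub
      · intro j; simpa using (hf'sub j).trans (Finset.sdiff_subset)
    · intro i i' hne
      have key : ∀ j : Fin k, Disjoint O₀ (f' j) := fun j =>
        Finset.disjoint_left.mpr fun a haO₀ haf =>
          (Finset.mem_sdiff.mp (hf'sub j haf)).2 haO₀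
      cases i using Fin.cases with
      | zero =>
        cases i' using Fin.cases with
        | zero => exact absurd rfl hne
        | succ j => simpa using key j
      | succ j =>
        cases i' using Fin.cases with
        | zero => simpa using (key j).symm
        | succ j' =>
          simpa using hf'disj j j' (fun hjj => hne (by rw [hjj]))
    · intro i
      refine Fin.cases ?_ ?_ i
      · simpa using hO₀card
      · intro j; simpa using hf'card j

private lemma qnef_cover {ι : Type*} [DecidableEq ι] (w : ι → ℕ) (g k : ℕ) (hg : 0 < g)
    (V : Finset ι) (hdvd : ∀ j ∈ V, w j ∣ g)
    (hmult : ∀ p : ℕ, p.Prime → (V.filter fun j => p ∣ w j).card ≤ k + 1) :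
    ∃ G ⊆ V, (∑ j ∈ G, w j ≤ g) ∧
      ∀ p : ℕ, p.Prime → ((V \ G).filter fun j => p ∣ w j).card ≤ k := by
  classical
  set Cover : Finset ι → Prop :=
    fun G => ∀ p : ℕ, p.Prime → (V.filter fun j => p ∣ w j).card = k + 1 → ∃ j ∈ G, p ∣ w j
    with hCover
  have coverV : Cover V := by
    intro p hp hcard
    have : (V.filter fun j => p ∣ w j).Nonempty := Finset.card_pos.mp (by omega)
    obtain ⟨j, hj⟩ := this
    exact ⟨j, (Finset.mem_filter.mp hj).1, (Finset.mem_filter.mp hj).2⟩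
  set S : Finset (Finset ι) := V.powerset.filter Cover with hS
  have hSne : S.Nonempty :=
    ⟨V, Finset.mem_filter.mpr ⟨Finset.mem_powerset.mpr (Finset.Subset.refl V), coverV⟩⟩
  obtain ⟨G, hGS, hGmin⟩ := S.exists_min_image Finset.card hSne
  have hGsub : G ⊆ V := Finset.mem_powerset.mp (Finset.mem_filter.mp hGS).1
  have hGcover : Cover G := (Finset.mem_filter.mp hGS).2
  -- private primes
  have priv : ∀ j ∈ G, ∃ q : ℕ, q.Prime ∧ q ∣ w j ∧
      ∀ j' ∈ G, j' ≠ j → ¬ q ∣ w j' := by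
    intro j hj
    have herase : ¬ Cover (G.erase j) := by
      intro hc
      have : G.erase j ∈ S := Finset.mem_filter.mpr
        ⟨Finset.mem_powerset.mpr ((Finset.erase_subset j G).trans hGsub), hc⟩
      have := hGmin _ this
      have hlt : (G.erase j).card < G.card := Finset.card_erase_lt_of_mem hj
      omega
    simp only [hCover] at herase
    push_neg at herase
    obtain ⟨p, hp, hpcard, hpnone⟩ := herase
    obtain ⟨j₀, hj₀G, hj₀dvd⟩ := hGcover p hp hpcard
    have hj₀ : j₀ = j := by
      by_contra hne
      exact hpnone j₀ (Finset.mem_erase.mpr ⟨hne, hj₀G⟩) hj₀dvd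
    subst hj₀
    exact ⟨p, hp, hj₀dvd, fun j' hj' hne => hpnone j' (Finset.mem_erase.mpr ⟨hne, hj'⟩)⟩
  choose q hq1 hq2 hq3 using priv
  -- a total function version
  obtain ⟨Q, hQ⟩ : ∃ Q : ι → ℕ, ∀ j (hj : j ∈ G), Q j = q j hj :=
    ⟨fun j => if hj : j ∈ G then q j hj else 2, fun j hj => dif_pos hj⟩
  have hQ1 : ∀ j ∈ G, (Q j).Prime := fun j hj => (hQ j hj) ▸ hq1 j hj
  have hQ2 : ∀ j ∈ G, Q j ∣ w j := fun j hj => (hQ j hj) ▸ hq2 j hj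
  have hQ3 : ∀ j ∈ G, ∀ j' ∈ G, j' ≠ j → ¬ Q j ∣ w j' :=
    fun j hj j' hj' hne => (hQ j hj) ▸ hq3 j hj j' hj' hne
  have hQinj : ∀ i ∈ G, ∀ j ∈ G, Q i = Q j → i = j := by
    intro i hi j hj hij
    by_contra hne
    exact hQ3 j hj i hi hne (hij ▸ hQ2 i hi)
  -- sum bound
  have hsum : ∑ j ∈ G, w j ≤ g := by
    have hQdvdg : ∀ j ∈ G, Q j ∣ g := fun j hj => (hQ2 j hj).trans (hdvd j (hGsub hj))
    have hprodQ : ∏ j ∈ G, Q j ∣ g := qnef_prod_primes_dvd Q g G hQ1 hQinj hQdvdg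
    obtain ⟨s, hs⟩ := hprodQ
    have key : ∀ j ∈ G, w j ≤ Q j * s := by
      intro j hj
      have hPdvd : ∏ i ∈ G.erase j, Q i ∣ g :=
        qnef_prod_primes_dvd Q g (G.erase j)
          (fun i hi => hQ1 i (Finset.mem_of_mem_erase hi))
          (fun i hi i' hi' h => hQinj i (Finset.mem_of_mem_erase hi) i' (Finset.mem_of_mem_erase hi') h)
          (fun i hi => hQdvdg i (Finset.mem_of_mem_erase hi))
      have hcop : Nat.Coprime (w j) (∏ i ∈ G.erase j, Q i) := by
        refine Nat.Coprime.prod_right fun i hi => ?_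
        have hine : j ≠ i := fun h => (Finset.mem_erase.mp hi).1 h.symm
        have : ¬ Q i ∣ w j := hQ3 i (Finset.mem_of_mem_erase hi) j hj hine
        exact (Nat.coprime_comm.mp ((hQ1 i (Finset.mem_of_mem_erase hi)).coprime_iff_not_dvd.mpr this))
      have hmdvd : w j * ∏ i ∈ G.erase j, Q i ∣ g :=
        hcop.mul_dvd_of_dvd_of_dvd (hdvd j (hGsub hj)) hPdvd
      have hPpos : 0 < ∏ i ∈ G.erase j, Q i :=
        Finset.prod_pos fun i hi => (hQ1 i (Finset.mem_of_mem_erase hi)).pos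
      have hle : w j * ∏ i ∈ G.erase j, Q i ≤ g := Nat.le_of_dvd hg hmdvd
      have hgQ : g = (∏ i ∈ G.erase j, Q i) * (Q j * s) := by
        rw [hs, ← Finset.mul_prod_erase G Q hj]; ring
      rw [hgQ, mul_comm (w j)] at hle
      exact Nat.le_of_mul_le_mul_left hle hPpos
    calc ∑ j ∈ G, w j ≤ ∑ j ∈ G, Q j * s := Finset.sum_le_sum key
      _ = (∑ j ∈ G, Q j) * s := by rw [Finset.sum_mul]
      _ ≤ (∏ j ∈ G, Q j) * s :=
        Nat.mul_le_mul_right s (qnef_sum_le_prod G Q (fun j hj => (hQ1 j hj).two_le))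
      _ = g := hs.symm
  refine ⟨G, hGsub, hsum, ?_⟩
  intro p hp
  by_cases hfull : (V.filter fun j => p ∣ w j).card = k + 1
  · obtain ⟨j, hjG, hjdvd⟩ := hGcover p hp hfull
    have hsub : ((V \ G).filter fun j => p ∣ w j) ⊆ (V.filter fun j => p ∣ w j).erase j := by
      intro x hx
      rw [Finset.mem_filter, Finset.mem_sdiff] at hx
      refine Finset.mem_erase.mpr ⟨fun h => hx.1.2 (h ▸ hjG), Finset.mem_filter.mpr ⟨hx.1.1, hx.2⟩⟩
    calc ((V \ G).filter fun j => p ∣ w j).card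
        ≤ ((V.filter fun j => p ∣ w j).erase j).card := Finset.card_le_card hsub
      _ = (V.filter fun j => p ∣ w j).card - 1 :=
          Finset.card_erase_of_mem (Finset.mem_filter.mpr ⟨hGsub hjG, hjdvd⟩)
      _ ≤ k := by omega
  · have := hmult p hp
    calc ((V \ G).filter fun j => p ∣ w j).card
        ≤ (V.filter fun j => p ∣ w j).card :=
          Finset.card_le_card (Finset.filter_subset_filter _ (Finset.sdiff_subset))
      _ ≤ k := by omega

private lemma qnef_partition {ι : Type*} [DecidableEq ι] (w : ι → ℕ) (g : ℕ) (hg : 0 < g) :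
    ∀ (k : ℕ) (V : Finset ι), (∀ j ∈ V, w j ∣ g) → (∀ j ∈ V, 1 < w j) →
    (∀ p : ℕ, p.Prime → (V.filter fun j => p ∣ w j).card ≤ k) →
    ∃ I : Fin k → Finset ι, (∀ i, I i ⊆ V) ∧
      (∀ i i', i ≠ i' → Disjoint (I i) (I i')) ∧
      (∀ j ∈ V, ∃ i, j ∈ I i) ∧ (∀ i, ∑ j ∈ I i, w j ≤ g) := by
  intro k
  induction k with
  | zero =>
    intro V hdvd hw1 hmult
    have hV : V = ∅ := by
      by_contra h
      obtain ⟨j, hj⟩ := Finset.nonempty_of_ne_empty h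
      obtain ⟨p, hp, hpd⟩ := Nat.exists_prime_and_dvd (by have := hw1 j hj; omega : w j ≠ 1)
      have : 0 < (V.filter fun j => p ∣ w j).card :=
        Finset.card_pos.mpr ⟨j, Finset.mem_filter.mpr ⟨hj, hpd⟩⟩
      have := hmult p hp
      omega
    exact ⟨fun i => i.elim0, fun i => i.elim0, fun i => i.elim0,
      fun j hj => absurd hj (by simp [hV]), fun i => i.elim0⟩
  | succ k ih =>
    intro V hdvd hw1 hmult
    obtain ⟨G, hGsub, hGsum, hGmult⟩ := qnef_cover w g k hg V hdvd hmult
    obtain ⟨I', hI'sub, hI'disj, hI'cov, hI'sum⟩ := ih (V \ G)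
      (fun j hj => hdvd j (Finset.mem_sdiff.mp hj).1)
      (fun j hj => hw1 j (Finset.mem_sdiff.mp hj).1) hGmult
    refine ⟨fun i => Fin.cases G I' i, ?_, ?_, ?_, ?_⟩
    · intro i
      cases i using Fin.cases with
      | zero => simpa using hGsub
      | succ j => simpa using (hI'sub j).trans Finset.sdiff_subset
    · intro i i' hne
      have key : ∀ j : Fin k, Disjoint G (I' j) := fun j =>
        Finset.disjoint_left.mpr fun a haG haf =>
          (Finset.mem_sdiff.mp (hI'sub j haf)).2 haG
      cases i using Fin.cases with
      | zero =>
        cases i' using Fin.cases with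
        | zero => exact absurd rfl hne
        | succ j => simpa using key j
      | succ j =>
        cases i' using Fin.cases with
        | zero => simpa using (key j).symm
        | succ j' => simpa using hI'disj j j' (fun hjj => hne (by rw [hjj]))
    · intro j hj
      by_cases hjG : j ∈ G
      · exact ⟨0, by simpa using hjG⟩
      · obtain ⟨i, hi⟩ := hI'cov j (Finset.mem_sdiff.mpr ⟨hj, hjG⟩)
        exact ⟨i.succ, by simpa using hi⟩
    · intro i
      cases i using Fin.cases with
      | zero => simpa using hGsum
      | succ j => simpa using hI'sum j

/-- For positive integers `w_0 ≤ … ≤ w_n` and `d_1, …, d_k` satisfying the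
Cartier condition (every weight divides every degree), the Fano condition
(`∑ d < ∑ w`) and the smoothness condition (any `k+1` weights are coprime),
there is a Q-nef-partition: pairwise disjoint subsets `I_1, …, I_k` of `{0,…,n}`
with `d_i = ∑_{j ∈ I_i} w_j`, and all weights outside `I_1 ∪ … ∪ I_k` equal `1`. -/
theorem qnef_partition_exists
    (n k : ℕ) (hn : 1 ≤ n) (hk : 1 ≤ k)
    (w : Fin (n + 1) → ℕ) (d : Fin k → ℕ)
    (hwpos : ∀ j, 0 < w j) (hdpos : ∀ i, 0 < d i)
    (hmono : Monotone w)
    (hdvd : ∀ (j : Fin (n + 1)) (i : Fin k), w j ∣ d i)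
    (hfano : ∑ i, d i < ∑ j, w j)
    (hgcd : ∀ S : Finset (Fin (n + 1)), S.card = k + 1 → S.gcd w = 1) :
    ∃ I : Fin k → Finset (Fin (n + 1)),
      (∀ i i', i ≠ i' → Disjoint (I i) (I i')) ∧
      (∀ i, d i = ∑ j ∈ I i, w j) ∧
      (∀ j, (∀ i, j ∉ I i) → w j = 1) := by
  classical
  set g : ℕ := Finset.univ.lcm w with hgdef
  have hgdvd : ∀ i, g ∣ d i := fun i => Finset.lcm_dvd fun j _ => hdvd j i
  have hi0 : (0 : ℕ) < k := hk
  have hgpos : 0 < g := by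
    rcases Nat.eq_zero_or_pos g with h | h
    · have := hgdvd ⟨0, hi0⟩
      rw [h] at this
      have := Nat.eq_zero_of_zero_dvd this
      have := hdpos ⟨0, hi0⟩
      omega
    · exact h
  have hgled : ∀ i, g ≤ d i := fun i => Nat.le_of_dvd (hdpos i) (hgdvd i)
  set V : Finset (Fin (n + 1)) := Finset.univ.filter (fun j => 1 < w j) with hVdef
  -- prime multiplicity bound
  have hmult : ∀ p : ℕ, p.Prime → (V.filter fun j => p ∣ w j).card ≤ k := by
    intro p hp
    by_contra hlt
    push_neg at hlt
    obtain ⟨S, hSsub, hScard⟩ :=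
      Finset.exists_subset_card_eq (le_trans (by omega) hlt : k + 1 ≤ (V.filter fun j => p ∣ w j).card)
    have hSg : S.gcd w = 1 := hgcd S hScard
    have hpdvd : p ∣ S.gcd w := Finset.dvd_gcd fun j hj =>
      (Finset.mem_filter.mp (hSsub hj)).2
    rw [hSg] at hpdvd
    have := Nat.le_of_dvd one_pos hpdvd
    have := hp.two_le
    omega
  -- partition of V
  obtain ⟨I', hI'sub, hI'disj, hI'cov, hI'sum⟩ := qnef_partition w g hgpos k V
    (fun j _ => Finset.dvd_lcm (Finset.mem_univ j))
    (fun j hj => (Finset.mem_filter.mp hj).2) hmult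
  set s : Fin k → ℕ := fun i => ∑ j ∈ I' i, w j with hsdef
  have hsled : ∀ i, s i ≤ d i := fun i => le_trans (hI'sum i) (hgled i)
  set O : Finset (Fin (n + 1)) := Finset.univ.filter (fun j => ¬ 1 < w j) with hOdef
  have hOone : ∀ j ∈ O, w j = 1 := by
    intro j hj
    have := (Finset.mem_filter.mp hj).2
    have := hwpos j
    omega
  -- V = ⋃ I' i, so ∑ i, s i = ∑ j in V, w j
  have hVbiUnion : V = Finset.univ.biUnion I' := by
    apply Finset.Subset.antisymm
    · intro j hj
      obtain ⟨i, hi⟩ := hI'cov j hj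
      exact Finset.mem_biUnion.mpr ⟨i, Finset.mem_univ i, hi⟩
    · intro j hj
      obtain ⟨i, _, hi⟩ := Finset.mem_biUnion.mp hj
      exact hI'sub i hi
  have hsumV : ∑ i, s i = ∑ j ∈ V, w j := by
    rw [hVbiUnion, Finset.sum_biUnion]
    intro i _ i' _ hne
    exact hI'disj i i' hne
  have hsplit : ∑ j ∈ V, w j + O.card = ∑ j, w j := by
    have h1 : ∑ j ∈ O, w j = O.card := by
      rw [Finset.card_eq_sum_ones]
      exact Finset.sum_congr rfl hOone
    rw [← h1, hVdef, hOdef]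
    exact Finset.sum_filter_add_sum_filter_not _ _ _
  set e : Fin k → ℕ := fun i => d i - s i with hedef
  have hesum : ∑ i, e i ≤ O.card := by
    have h1 : ∑ i, (e i + s i) = ∑ i, d i :=
      Finset.sum_congr rfl fun i _ => by
        have := hsled i; simp only [hedef]; omega
    rw [Finset.sum_add_distrib] at h1
    have := hsumV
    omega
  obtain ⟨O', hO'sub, hO'disj, hO'card⟩ := qnef_exists_disjoint_subsets k O e hesum
  have hVOdisj : ∀ i i', Disjoint (I' i) (O' i') := by
    intro i i'
    refine Finset.disjoint_left.mpr fun a ha ha' => ?_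
    have h1 : 1 < w a := (Finset.mem_filter.mp (hI'sub i ha)).2
    have h2 : ¬ 1 < w a := (Finset.mem_filter.mp (hO'sub i' ha')).2
    exact h2 h1
  refine ⟨fun i => I' i ∪ O' i, ?_, ?_, ?_⟩
  · intro i i' hne
    rw [Finset.disjoint_union_left, Finset.disjoint_union_right, Finset.disjoint_union_right]
    exact ⟨⟨hI'disj i i' hne, hVOdisj i i'⟩, ⟨(hVOdisj i' i).symm, hO'disj i i' hne⟩⟩
  · intro i
    rw [Finset.sum_union (hVOdisj i i)]
    have h1 : ∑ j ∈ O' i, w j = e i := by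
      calc ∑ j ∈ O' i, w j = ∑ _j ∈ O' i, 1 :=
            Finset.sum_congr rfl fun j hj => hOone j (hO'sub i hj)
        _ = (O' i).card := by simp
        _ = e i := hO'card i
    rw [h1]
    have hq : s i = ∑ x ∈ I' i, w x := rfl
    have he : e i = d i - s i := rfl
    have := hsled i
    omega
  · intro j hj
    by_cases h1 : 1 < w j
    · have hjV : j ∈ V := Finset.mem_filter.mpr ⟨Finset.mem_univ j, h1⟩
      obtain ⟨i, hi⟩ := hI'cov j hjV
      exact absurd (Finset.mem_union_left _ hi) (hj i)
    · have := hwpos j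
      omega
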